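/- Let r ≥ 4 and k ≥ 1 be integers. There exists a unique solution z = (z^{(a)}_m) of the level-k restricted Q-system of type D_r all of whose entries z^{(a)}_m (a ∈ I, 0 ≤ m ≤ k) are real and strictly positive. Moreover, this positive solution satisfies, for every a ∈ I: (symmetry) z^{(a)}_m = z^{(a)}_{k−m} for 0 ≤ m ≤ k, and (unimodality) z^{(a)}_{m−1} < z^{(a)}_m for 1 ≤ m ≤ ⌊k/2⌋. -/

import Mathlib

set_option maxHeartbeats 1000000



/-- The adjacency matrix of the Dynkin diagram `D_r` on the index set `{1, …, r}`:
`A a b = 1` iff (`|a - b| = 1` and `a, b ≤ r - 1`) or `{a, b} = {r - 2, r}`. -/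
def adjD (r a b : ℕ) : ℕ :=
  if ((a + 1 = b ∨ b + 1 = a) ∧ a ≤ r - 1 ∧ b ≤ r - 1)
      ∨ (a = r - 2 ∧ b = r) ∨ (a = r ∧ b = r - 2) then 1 else 0

/-- `Q : ℕ → ℕ → ℂ` is a solution of the unrestricted `Q`-system of type `D_r`:
`Q a 0 = 1` and `(Q a m)^2 = ∏_b (Q b m)^(A a b) + Q a (m-1) * Q a (m+1)`
for all `a ∈ {1, …, r}` and `m ≥ 1`. -/
def IsUnresQSysD (r : ℕ) (Q : ℕ → ℕ → ℂ) : Prop :=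
  (∀ a ∈ Finset.Icc 1 r, Q a 0 = 1) ∧
  ∀ a ∈ Finset.Icc 1 r, ∀ m : ℕ, 1 ≤ m →
    (Q a m) ^ 2 = (∏ b ∈ Finset.Icc 1 r, (Q b m) ^ adjD r a b) + Q a (m - 1) * Q a (m + 1)

/-- `Q` is a solution of the level-`k` restricted `Q`-system of type `D_r`:
`Q a 0 = 1`, `Q a k = 1`, and the `Q`-system recurrence holds for `1 ≤ m ≤ k - 1`. -/
def IsResQSysD (r k : ℕ) (Q : ℕ → ℕ → ℂ) : Prop :=
  (∀ a ∈ Finset.Icc 1 r, Q a 0 = 1) ∧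
  (∀ a ∈ Finset.Icc 1 r, Q a k = 1) ∧
  ∀ a ∈ Finset.Icc 1 r, ∀ m : ℕ, 1 ≤ m → m ≤ k - 1 →
    (Q a m) ^ 2 = (∏ b ∈ Finset.Icc 1 r, (Q b m) ^ adjD r a b) + Q a (m - 1) * Q a (m + 1)

/-- There exists a unique solution of the level-`k` restricted `Q`-system of type `D_r`
all of whose entries are real and strictly positive; it satisfies symmetry and unimodality. -/

def phiD (r a : ℕ) : ℕ := if a ≤ r - 2 then 2*a*(2*r - a) else r^2 - 2

lemma sum_restrict (r : ℕ) (f : ℕ → ℕ) (t : Finset ℕ) (hsub : t ⊆ Finset.Icc 1 r)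
    (h0 : ∀ b ∈ Finset.Icc 1 r, b ∉ t → f b = 0) :
    ∑ b ∈ Finset.Icc 1 r, f b = ∑ b ∈ t, f b := (Finset.sum_subset hsub h0).symm

lemma adjD_one (r a b : ℕ)
    (h : ((a + 1 = b ∨ b + 1 = a) ∧ a ≤ r - 1 ∧ b ≤ r - 1)
      ∨ (a = r - 2 ∧ b = r) ∨ (a = r ∧ b = r - 2)) : adjD r a b = 1 := by
  unfold adjD; rw [if_pos h]

lemma adjD_zero (r a b : ℕ)
    (h : ¬ (((a + 1 = b ∨ b + 1 = a) ∧ a ≤ r - 1 ∧ b ≤ r - 1)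
      ∨ (a = r - 2 ∧ b = r) ∨ (a = r ∧ b = r - 2))) : adjD r a b = 0 := by
  unfold adjD; rw [if_neg h]

lemma sum_adj (r : ℕ) (hr : 4 ≤ r) (a : ℕ) (ha1 : 1 ≤ a) (har : a ≤ r) :
    (∑ b ∈ Finset.Icc 1 r, adjD r a b * phiD r b) + 2 ≤ 2 * phiD r a := by
  obtain ⟨s, rfl⟩ : ∃ s, r = s + 4 := ⟨r - 4, by omega⟩
  have hsq : (s+4)^2 = s*s + 8*s + 16 := by ring
  by_cases h1 : a = 1
  · subst h1
    rw [sum_restrict _ _ ({2} : Finset ℕ)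
      (by intro x hx; simp at hx; simp [Finset.mem_Icc]; omega)
      (by intro b hb hbt; simp [Finset.mem_Icc] at hb; simp at hbt
          rw [adjD_zero _ _ _ (by omega)]; ring)]
    rw [Finset.sum_singleton, adjD_one _ 1 2 (by left; omega)]
    have e1 : phiD (s+4) 1 = 2*1*(2*s+7) := by
      unfold phiD; rw [if_pos (by omega), show 2*(s+4)-1 = 2*s+7 from by omega]
    have e2 : phiD (s+4) 2 = 2*2*(2*s+6) := by
      unfold phiD; rw [if_pos (by omega), show 2*(s+4)-2 = 2*s+6 from by omega]
    rw [e1, e2]; omega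
  · by_cases h2 : a = s + 2
    · subst h2
      rw [sum_restrict _ _ ({s+1, s+3, s+4} : Finset ℕ)
        (by intro x hx; simp at hx; simp [Finset.mem_Icc]; omega)
        (by intro b hb hbt; simp [Finset.mem_Icc] at hb; simp at hbt
            rw [adjD_zero _ _ _ (by omega)]; ring)]
      rw [Finset.sum_insert (by simp only [Finset.mem_insert, Finset.mem_singleton]; omega), Finset.sum_insert (by simp only [Finset.mem_singleton]; omega),
        Finset.sum_singleton]
      rw [adjD_one _ (s+2) (s+1) (by left; omega),
        adjD_one _ (s+2) (s+3) (by left; omega),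
        adjD_one _ (s+2) (s+4) (by right; left; omega)]
      have e1 : phiD (s+4) (s+1) = 2*(s+1)*(s+7) := by
        unfold phiD; rw [if_pos (by omega), show 2*(s+4)-(s+1) = s+7 from by omega]
      have e2 : phiD (s+4) (s+3) = s*s + 8*s + 14 := by
        unfold phiD; rw [if_neg (by omega)]; omega
      have e3 : phiD (s+4) (s+4) = s*s + 8*s + 14 := by
        unfold phiD; rw [if_neg (by omega)]; omega
      have e4 : phiD (s+4) (s+2) = 2*(s+2)*(s+6) := by
        unfold phiD; rw [if_pos (by omega), show 2*(s+4)-(s+2) = s+6 from by omega]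
      rw [e1, e2, e3, e4]; nlinarith
    · by_cases h3 : a = s + 3
      · subst h3
        rw [sum_restrict _ _ ({s+2} : Finset ℕ)
          (by intro x hx; simp at hx; simp [Finset.mem_Icc]; omega)
          (by intro b hb hbt; simp [Finset.mem_Icc] at hb; simp at hbt
              rw [adjD_zero _ _ _ (by omega)]; ring)]
        rw [Finset.sum_singleton, adjD_one _ (s+3) (s+2) (by left; omega)]
        have e1 : phiD (s+4) (s+2) = 2*(s+2)*(s+6) := by
          unfold phiD; rw [if_pos (by omega), show 2*(s+4)-(s+2) = s+6 from by omega]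
        have e2 : phiD (s+4) (s+3) = s*s + 8*s + 14 := by
          unfold phiD; rw [if_neg (by omega)]; omega
        rw [e1, e2]; nlinarith
      · by_cases h4 : a = s + 4
        · subst h4
          rw [sum_restrict _ _ ({s+2} : Finset ℕ)
            (by intro x hx; simp at hx; simp [Finset.mem_Icc]; omega)
            (by intro b hb hbt; simp [Finset.mem_Icc] at hb; simp at hbt
                rw [adjD_zero _ _ _ (by omega)]; ring)]
          rw [Finset.sum_singleton, adjD_one _ (s+4) (s+2) (by right; right; omega)]
          have e1 : phiD (s+4) (s+2) = 2*(s+2)*(s+6) := by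
            unfold phiD; rw [if_pos (by omega), show 2*(s+4)-(s+2) = s+6 from by omega]
          have e2 : phiD (s+4) (s+4) = s*s + 8*s + 14 := by
            unfold phiD; rw [if_neg (by omega)]; omega
          rw [e1, e2]; nlinarith
        · -- chain case 2 ≤ a ≤ s+1
          obtain ⟨c, rfl⟩ : ∃ c, a = c + 2 := ⟨a - 2, by omega⟩
          have hcs : c + 1 ≤ s := by omega
          rw [sum_restrict _ _ ({c+1, c+3} : Finset ℕ)
            (by intro x hx; simp at hx; simp [Finset.mem_Icc]; omega)
            (by intro b hb hbt; simp [Finset.mem_Icc] at hb; simp at hbt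
                rw [adjD_zero _ _ _ (by omega)]; ring)]
          rw [Finset.sum_insert (by simp), Finset.sum_singleton]
          rw [adjD_one _ (c+2) (c+1) (by left; omega),
            adjD_one _ (c+2) (c+3) (by left; omega)]
          obtain ⟨t, rfl⟩ : ∃ t, s = c + 1 + t := ⟨s - c - 1, by omega⟩
          have e1 : phiD (c+1+t+4) (c+1) = 2*(c+1)*(c+2*t+9) := by
            unfold phiD
            rw [if_pos (by omega), show 2*(c+1+t+4)-(c+1) = c+2*t+9 from by omega]
          have e2 : phiD (c+1+t+4) (c+3) = 2*(c+3)*(c+2*t+7) := by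
            unfold phiD
            rw [if_pos (by omega), show 2*(c+1+t+4)-(c+3) = c+2*t+7 from by omega]
          have e3 : phiD (c+1+t+4) (c+2) = 2*(c+2)*(c+2*t+8) := by
            unfold phiD
            rw [if_pos (by omega), show 2*(c+1+t+4)-(c+2) = c+2*t+8 from by omega]
          rw [e1, e2, e3]; nlinarith


def psiD (k m : ℕ) : ℕ := m * (k - m) + 1

lemma phiD_pos (r : ℕ) (hr : 4 ≤ r) (a : ℕ) (ha : 1 ≤ a) : 1 ≤ phiD r a := by
  unfold phiD; split_ifs with h
  · have h2 : 1 ≤ 2*r - a := by omega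
    nlinarith
  · have h2 : 16 ≤ r^2 := by nlinarith
    omega

lemma psiD_pos (k m : ℕ) : 1 ≤ psiD k m := by unfold psiD; omega

lemma psiD_step (k m : ℕ) (h1 : 1 ≤ m) (h2 : m + 1 ≤ k) :
    psiD k (m-1) + psiD k (m+1) + 2 = 2 * psiD k m := by
  obtain ⟨m', rfl⟩ : ∃ m', m = m' + 1 := ⟨m - 1, by omega⟩
  obtain ⟨n, hn⟩ : ∃ n, k = m' + 1 + (n + 1) := ⟨k - m' - 2, by omega⟩
  subst hn
  unfold psiD
  have e1 : m' + 1 - 1 = m' := by omega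
  have e2 : m' + 1 + (n + 1) - m' = n + 2 := by omega
  have e3 : m' + 1 + (n + 1) - (m' + 1) = n + 1 := by omega
  have e4 : m' + 1 + (n + 1) - (m' + 1 + 1) = n := by omega
  rw [e1, e2, e3, e4]; ring

noncomputable def WD (r k a m : ℕ) : ℝ := (phiD r a : ℝ) * (psiD k m : ℝ)
noncomputable def barZ (r k a m : ℕ) : ℝ := Real.exp (WD r k a m)

noncomputable def stepF (r k : ℕ) (g : ℕ → ℕ → ℝ) (a m : ℕ) : ℝ :=
  if 1 ≤ a ∧ a ≤ r ∧ 1 ≤ m ∧ m ≤ k - 1 then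
    Real.sqrt ((∏ b ∈ Finset.Icc 1 r, (g b m) ^ adjD r a b) + g a (m-1) * g a (m+1))
  else 1

noncomputable def seqQ (r k : ℕ) : ℕ → ℕ → ℕ → ℝ
  | 0 => fun _ _ => 1
  | n+1 => stepF r k (seqQ r k n)

noncomputable def limQ (r k a m : ℕ) : ℝ := ⨆ n, seqQ r k n a m

lemma stepF_mono (r k : ℕ) (g g' : ℕ → ℕ → ℝ) (h0 : ∀ a m, 0 ≤ g a m)
    (h1 : ∀ a m, g a m ≤ g' a m) (a m : ℕ) : stepF r k g a m ≤ stepF r k g' a m := by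
  unfold stepF
  split_ifs with h
  · exact Real.sqrt_le_sqrt (add_le_add
      (Finset.prod_le_prod (fun b _ => pow_nonneg (h0 b m) _)
        (fun b _ => pow_le_pow_left₀ (h0 b m) (h1 b m) _))
      (mul_le_mul (h1 a (m-1)) (h1 a (m+1)) (h0 a (m+1))
        (le_trans (h0 a (m-1)) (h1 a (m-1)))))
  · exact le_refl 1

lemma one_le_stepF (r k : ℕ) (g : ℕ → ℕ → ℝ) (hg : ∀ a m, 1 ≤ g a m) (a m : ℕ) :
    1 ≤ stepF r k g a m := by
  unfold stepF
  split_ifs with h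
  · rw [show (1:ℝ) = Real.sqrt 1 from (Real.sqrt_one).symm]
    apply Real.sqrt_le_sqrt
    have hp : (0:ℝ) ≤ ∏ b ∈ Finset.Icc 1 r, (g b m) ^ adjD r a b :=
      Finset.prod_nonneg fun b _ => pow_nonneg (le_trans zero_le_one (hg b m)) _
    nlinarith [hg a (m-1), hg a (m+1)]
  · exact le_refl 1

lemma one_le_seqQ (r k : ℕ) : ∀ n a m, 1 ≤ seqQ r k n a m := by
  intro n
  induction n with
  | zero => intro a m; exact le_refl 1
  | succ n ih => intro a m; exact one_le_stepF r k _ ih a m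

lemma seqQ_mono_succ (r k : ℕ) : ∀ n a m, seqQ r k n a m ≤ seqQ r k (n+1) a m := by
  intro n
  induction n with
  | zero => intro a m; exact one_le_stepF r k _ (fun _ _ => le_refl 1) a m
  | succ n ih =>
      intro a m
      exact stepF_mono r k _ _ (fun a m => le_trans zero_le_one (one_le_seqQ r k n a m)) ih a m

lemma one_le_barZ (r k a m : ℕ) : 1 ≤ barZ r k a m := by
  unfold barZ
  rw [show (1:ℝ) = Real.exp 0 from Real.exp_zero.symm]
  apply Real.exp_le_exp.2
  unfold WD
  positivity

lemma supersol (r k : ℕ) (hr : 4 ≤ r) (a m : ℕ)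
    (h : 1 ≤ a ∧ a ≤ r ∧ 1 ≤ m ∧ m ≤ k - 1) :
    (∏ b ∈ Finset.Icc 1 r, (barZ r k b m) ^ adjD r a b)
      + barZ r k a (m-1) * barZ r k a (m+1) ≤ (barZ r k a m)^2 := by
  obtain ⟨ha1, har, hm1, hmk⟩ := h
  have hk2 : 2 ≤ k := by omega
  have hm2 : m + 1 ≤ k := by omega
  have hsq : (barZ r k a m)^2 = Real.exp (2 * WD r k a m) := by
    unfold barZ; rw [← Real.exp_nat_mul]; norm_num
  have hprod : (∏ b ∈ Finset.Icc 1 r, (barZ r k b m) ^ adjD r a b)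
      = Real.exp (∑ b ∈ Finset.Icc 1 r, (adjD r a b : ℝ) * WD r k b m) := by
    rw [Real.exp_sum]
    apply Finset.prod_congr rfl
    intro b _
    unfold barZ
    rw [← Real.exp_nat_mul]
  have key1 : (∑ b ∈ Finset.Icc 1 r, (adjD r a b : ℝ) * WD r k b m)
      ≤ 2 * WD r k a m - 2 := by
    have hcast : (∑ b ∈ Finset.Icc 1 r, (adjD r a b : ℝ) * WD r k b m)
        = (∑ b ∈ Finset.Icc 1 r, (adjD r a b : ℝ) * (phiD r b : ℝ)) * (psiD k m : ℝ) := by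
      rw [Finset.sum_mul]
      exact Finset.sum_congr rfl (fun b _ => by unfold WD; ring)
    rw [hcast]
    have hs := sum_adj r hr a ha1 har
    have hs' : (∑ b ∈ Finset.Icc 1 r, (adjD r a b : ℝ) * (phiD r b : ℝ))
        ≤ 2 * (phiD r a : ℝ) - 2 := by
      have h2 : ((∑ b ∈ Finset.Icc 1 r, adjD r a b * phiD r b : ℕ) : ℝ) + 2
          ≤ 2 * (phiD r a : ℝ) := by exact_mod_cast hs
      push_cast at h2
      linarith
    have hpsi1 : (1:ℝ) ≤ (psiD k m : ℝ) := by exact_mod_cast psiD_pos k m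
    have hpsi0 : (0:ℝ) ≤ (psiD k m : ℝ) := by positivity
    have hmul := mul_le_mul_of_nonneg_right hs' hpsi0
    unfold WD
    nlinarith
  have key2 : barZ r k a (m-1) * barZ r k a (m+1) ≤ Real.exp (2 * WD r k a m - 2) := by
    unfold barZ
    rw [← Real.exp_add]
    apply Real.exp_le_exp.2
    have hstep := psiD_step k m hm1 hm2
    have hstep' : (psiD k (m-1) : ℝ) + (psiD k (m+1) : ℝ) = 2 * (psiD k m : ℝ) - 2 := by
      have h2 : ((psiD k (m-1) + psiD k (m+1) + 2 : ℕ) : ℝ) = ((2 * psiD k m : ℕ) : ℝ) := by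
        exact_mod_cast congrArg (Nat.cast (R := ℝ)) hstep
      push_cast at h2
      linarith
    have hphi1 : (1:ℝ) ≤ (phiD r a : ℝ) := by exact_mod_cast phiD_pos r hr a ha1
    unfold WD
    nlinarith
  have h2e : (2:ℝ) ≤ Real.exp 2 := by
    have := Real.add_one_le_exp (2:ℝ)
    linarith
  calc (∏ b ∈ Finset.Icc 1 r, (barZ r k b m) ^ adjD r a b)
      + barZ r k a (m-1) * barZ r k a (m+1)
      ≤ Real.exp (2 * WD r k a m - 2) + Real.exp (2 * WD r k a m - 2) :=
        add_le_add (by rw [hprod]; exact Real.exp_le_exp.2 key1) key2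
    _ = 2 * Real.exp (2 * WD r k a m - 2) := by ring
    _ ≤ Real.exp 2 * Real.exp (2 * WD r k a m - 2) := by
        gcongr
    _ = Real.exp (2 * WD r k a m) := by rw [← Real.exp_add]; norm_num
    _ = (barZ r k a m)^2 := hsq.symm

lemma seqQ_le_barZ (r k : ℕ) (hr : 4 ≤ r) : ∀ n a m, seqQ r k n a m ≤ barZ r k a m := by
  intro n
  induction n with
  | zero => intro a m; exact one_le_barZ r k a m
  | succ n ih =>
      intro a m
      have step1 : seqQ r k (n+1) a m ≤ stepF r k (barZ r k) a m :=
        stepF_mono r k _ _ (fun a m => le_trans zero_le_one (one_le_seqQ r k n a m)) ih a m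
      refine le_trans step1 ?_
      unfold stepF
      split_ifs with h
      · calc Real.sqrt ((∏ b ∈ Finset.Icc 1 r, (barZ r k b m) ^ adjD r a b)
            + barZ r k a (m-1) * barZ r k a (m+1))
            ≤ Real.sqrt ((barZ r k a m)^2) := Real.sqrt_le_sqrt (supersol r k hr a m h)
          _ = barZ r k a m := by
              rw [Real.sqrt_sq (le_trans zero_le_one (one_le_barZ r k a m))]
      · exact one_le_barZ r k a m

open Filter Topology

lemma limQ_bddAbove (r k : ℕ) (hr : 4 ≤ r) (a m : ℕ) :
    BddAbove (Set.range (fun n => seqQ r k n a m)) :=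
  ⟨barZ r k a m, by rintro x ⟨n, rfl⟩; exact seqQ_le_barZ r k hr n a m⟩

lemma limQ_tendsto (r k : ℕ) (hr : 4 ≤ r) (a m : ℕ) :
    Tendsto (fun n => seqQ r k n a m) atTop (𝓝 (limQ r k a m)) :=
  tendsto_atTop_ciSup (monotone_nat_of_le_succ (fun n => seqQ_mono_succ r k n a m))
    (limQ_bddAbove r k hr a m)

lemma one_le_limQ (r k : ℕ) (hr : 4 ≤ r) (a m : ℕ) : 1 ≤ limQ r k a m := by
  have := le_ciSup (limQ_bddAbove r k hr a m) 0
  exact le_trans (le_refl 1) this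

lemma limQ_boundary (r k : ℕ) (a m : ℕ) (h : ¬(1 ≤ a ∧ a ≤ r ∧ 1 ≤ m ∧ m ≤ k - 1)) :
    limQ r k a m = 1 := by
  have hc : ∀ n, seqQ r k n a m = 1 := by
    intro n
    cases n with
    | zero => rfl
    | succ n => unfold seqQ stepF; rw [if_neg h]
  unfold limQ
  rw [show (fun n => seqQ r k n a m) = fun _ => (1:ℝ) from funext hc]
  exact ciSup_const

lemma limQ_rec (r k : ℕ) (hr : 4 ≤ r) (a m : ℕ)
    (h : 1 ≤ a ∧ a ≤ r ∧ 1 ≤ m ∧ m ≤ k - 1) :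
    (limQ r k a m)^2 = (∏ b ∈ Finset.Icc 1 r, (limQ r k b m) ^ adjD r a b)
      + limQ r k a (m-1) * limQ r k a (m+1) := by
  set L : ℝ := (∏ b ∈ Finset.Icc 1 r, (limQ r k b m) ^ adjD r a b)
      + limQ r k a (m-1) * limQ r k a (m+1) with hL
  have hLnonneg : 0 ≤ L := by
    apply add_nonneg
    · exact Finset.prod_nonneg fun b _ =>
        pow_nonneg (le_trans zero_le_one (one_le_limQ r k hr b m)) _
    · exact mul_nonneg (le_trans zero_le_one (one_le_limQ r k hr a (m-1)))
        (le_trans zero_le_one (one_le_limQ r k hr a (m+1)))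
  have h1 : Tendsto (fun n => seqQ r k (n+1) a m) atTop (𝓝 (limQ r k a m)) :=
    (limQ_tendsto r k hr a m).comp (tendsto_add_atTop_nat 1)
  have h2 : Tendsto (fun n => seqQ r k (n+1) a m) atTop (𝓝 (Real.sqrt L)) := by
    have harg : Tendsto (fun n =>
        (∏ b ∈ Finset.Icc 1 r, (seqQ r k n b m) ^ adjD r a b)
          + seqQ r k n a (m-1) * seqQ r k n a (m+1)) atTop (𝓝 L) := by
      apply Tendsto.add
      · exact tendsto_finset_prod _ fun b _ => (limQ_tendsto r k hr b m).pow _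
      · exact (limQ_tendsto r k hr a (m-1)).mul (limQ_tendsto r k hr a (m+1))
    have := (Real.continuous_sqrt.tendsto L).comp harg
    refine this.congr fun n => ?_
    rw [show seqQ r k (n+1) a m = stepF r k (seqQ r k n) a m from rfl]
    simp only [stepF, if_pos h]
    rfl
  have hlim : limQ r k a m = Real.sqrt L := tendsto_nhds_unique h1 h2
  rw [hlim, Real.sq_sqrt hLnonneg]

lemma WD_pos (r k : ℕ) (hr : 4 ≤ r) (a m : ℕ) (ha : 1 ≤ a) : 0 < WD r k a m := by
  unfold WD
  have h1 : (1:ℝ) ≤ (phiD r a : ℝ) := by exact_mod_cast phiD_pos r hr a ha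
  have h2 : (1:ℝ) ≤ (psiD k m : ℝ) := by exact_mod_cast psiD_pos k m
  nlinarith

/-- One-sided comparison via the discrete maximum principle with barrier `WD`. -/
lemma real_le (r k : ℕ) (hr : 4 ≤ r) (hk : 1 ≤ k) (z w : ℕ → ℕ → ℝ)
    (hzpos : ∀ a ∈ Finset.Icc 1 r, ∀ m ≤ k, 0 < z a m)
    (hwpos : ∀ a ∈ Finset.Icc 1 r, ∀ m ≤ k, 0 < w a m)
    (hz0 : ∀ a ∈ Finset.Icc 1 r, z a 0 = 1)
    (hzk : ∀ a ∈ Finset.Icc 1 r, z a k = 1)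
    (hw0 : ∀ a ∈ Finset.Icc 1 r, w a 0 = 1)
    (hwk : ∀ a ∈ Finset.Icc 1 r, w a k = 1)
    (hzrec : ∀ a ∈ Finset.Icc 1 r, ∀ m, 1 ≤ m → m ≤ k - 1 →
      (z a m)^2 = (∏ b ∈ Finset.Icc 1 r, (z b m) ^ adjD r a b) + z a (m-1) * z a (m+1))
    (hwrec : ∀ a ∈ Finset.Icc 1 r, ∀ m, 1 ≤ m → m ≤ k - 1 →
      (w a m)^2 = (∏ b ∈ Finset.Icc 1 r, (w b m) ^ adjD r a b) + w a (m-1) * w a (m+1)) :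
    ∀ a ∈ Finset.Icc 1 r, ∀ m ≤ k, w a m ≤ z a m := by
  classical
  set S : Finset (ℕ × ℕ) := (Finset.Icc 1 r) ×ˢ (Finset.Icc 0 k) with hS
  set U : ℕ × ℕ → ℝ :=
    fun p => (Real.log (w p.1 p.2) - Real.log (z p.1 p.2)) / WD r k p.1 p.2 with hU
  have hSne : S.Nonempty := ⟨(1, 0), by simp [hS, Finset.mem_product]; omega⟩
  obtain ⟨p, hpS, hpmax⟩ := S.exists_max_image U hSne
  by_cases hT : U p ≤ 0
  · -- all ratios ≤ 1
    intro a ha m hm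
    have hq : (a, m) ∈ S := by
      simp only [hS, Finset.mem_product, Finset.mem_Icc] at *
      omega
    have h1 := le_trans (hpmax (a, m) hq) hT
    have hW := WD_pos r k hr a m (by simp [Finset.mem_Icc] at ha; omega)
    have hnum : Real.log (w a m) - Real.log (z a m) ≤ 0 := by
      by_contra hcon
      push_neg at hcon
      have : 0 < U (a, m) := div_pos hcon hW
      simp only [hU] at this h1
      linarith
    have hzp := hzpos a ha m hm
    have hwp := hwpos a ha m hm
    have := Real.log_le_log_iff hwp hzp
    linarith [this.1 (by linarith)]
  · push_neg at hT
    exfalso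
    obtain ⟨a, m⟩ := p
    have hpS' : a ∈ Finset.Icc 1 r ∧ m ∈ Finset.Icc 0 k := by
      simpa [hS, Finset.mem_product] using hpS
    obtain ⟨haI, hmI⟩ := hpS'
    have ha1 : 1 ≤ a := by simp [Finset.mem_Icc] at haI; omega
    have har : a ≤ r := by simp [Finset.mem_Icc] at haI; omega
    have hmk : m ≤ k := by simp [Finset.mem_Icc] at hmI; omega
    have hWp := WD_pos r k hr a m ha1
    -- boundary rows give U = 0, so m is interior
    have hm0 : m ≠ 0 := by
      intro h0
      subst h0
      have : U (a, 0) = 0 := by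
        simp only [hU]
        rw [hz0 a haI, hw0 a haI]
        simp
      rw [this] at hT
      exact lt_irrefl 0 hT
    have hmk' : m ≠ k := by
      intro h0
      subst h0
      have : U (a, m) = 0 := by
        simp only [hU]
        rw [hzk a haI, hwk a haI]
        simp
      rw [this] at hT
      exact lt_irrefl 0 hT
    have hm1 : 1 ≤ m := by omega
    have hmk1 : m ≤ k - 1 := by omega
    -- T := U p; u(q) ≤ T * W(q) for all q ∈ S, with equality at p
    set T := U (a, m) with hTdef
    have hu : ∀ b ∈ Finset.Icc 1 r, ∀ j ≤ k,
        Real.log (w b j) - Real.log (z b j) ≤ T * WD r k b j := by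
      intro b hb j hj
      have hbS : (b, j) ∈ S := by
        simp only [hS, Finset.mem_product, Finset.mem_Icc] at *
        omega
      have hWq := WD_pos r k hr b j (by simp [Finset.mem_Icc] at hb; omega)
      have := hpmax (b, j) hbS
      simp only [hU] at this
      calc Real.log (w b j) - Real.log (z b j)
          = ((Real.log (w b j) - Real.log (z b j)) / WD r k b j) * WD r k b j := by
            field_simp
        _ ≤ T * WD r k b j := by
            apply mul_le_mul_of_nonneg_right _ (le_of_lt hWq)
            exact this
    have hueq : Real.log (w a m) - Real.log (z a m) = T * WD r k a m := by
      simp only [hTdef, hU]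
      field_simp
    -- positivity of the four aggregates
    have hzb : ∀ b ∈ Finset.Icc 1 r, 0 < z b m := fun b hb => hzpos b hb m hmk
    have hwb : ∀ b ∈ Finset.Icc 1 r, 0 < w b m := fun b hb => hwpos b hb m hmk
    have hPz : 0 < ∏ b ∈ Finset.Icc 1 r, (z b m) ^ adjD r a b :=
      Finset.prod_pos fun b hb => pow_pos (hzb b hb) _
    have hPw : 0 < ∏ b ∈ Finset.Icc 1 r, (w b m) ^ adjD r a b :=
      Finset.prod_pos fun b hb => pow_pos (hwb b hb) _
    have hRz : 0 < z a (m-1) * z a (m+1) :=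
      mul_pos (hzpos a haI (m-1) (by omega)) (hzpos a haI (m+1) (by omega))
    have hRw : 0 < w a (m-1) * w a (m+1) :=
      mul_pos (hwpos a haI (m-1) (by omega)) (hwpos a haI (m+1) (by omega))
    set Pz := ∏ b ∈ Finset.Icc 1 r, (z b m) ^ adjD r a b with hPzd
    set Pw := ∏ b ∈ Finset.Icc 1 r, (w b m) ^ adjD r a b with hPwd
    set Rw := w a (m-1) * w a (m+1) with hRwd
    set Rz := z a (m-1) * z a (m+1) with hRzd
    set M := max (Pw / Pz) (Rw / Rz) with hM
    have hMpos : 0 < M := lt_max_of_lt_left (div_pos hPw hPz)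
    have hMeq : Real.log M = max (Real.log (Pw / Pz)) (Real.log (Rw / Rz)) := by
      rcases max_choice (Pw / Pz) (Rw / Rz) with hc | hc
      · rw [hM, hc]
        exact le_antisymm (le_max_left _ _) (max_le (le_refl _)
          (Real.log_le_log (div_pos hRw hRz) (hc ▸ le_max_right _ _)))
      · rw [hM, hc]
        exact le_antisymm (le_max_right _ _) (max_le
          (Real.log_le_log (div_pos hPw hPz) (hc ▸ le_max_left _ _)) (le_refl _))
    have hw2 : (w a m)^2 ≤ M * (z a m)^2 := by
      rw [hwrec a haI m hm1 hmk1, hzrec a haI m hm1 hmk1]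
      have t1 : Pw ≤ M * Pz := by
        have := le_max_left (Pw / Pz) (Rw / Rz)
        calc Pw = (Pw / Pz) * Pz := by field_simp
          _ ≤ M * Pz := mul_le_mul_of_nonneg_right this (le_of_lt hPz)
      have t2 : Rw ≤ M * Rz := by
        have := le_max_right (Pw / Pz) (Rw / Rz)
        calc Rw = (Rw / Rz) * Rz := by field_simp
          _ ≤ M * Rz := mul_le_mul_of_nonneg_right this (le_of_lt hRz)
      calc Pw + Rw ≤ M * Pz + M * Rz := add_le_add t1 t2
        _ = M * (Pz + Rz) := by ring
    -- take logs
    have hzp := hzpos a haI m hmk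
    have hwp := hwpos a haI m hmk
    have hlog2 : 2 * (Real.log (w a m) - Real.log (z a m)) ≤ Real.log M := by
      have hl := Real.log_le_log (by positivity) hw2
      rw [Real.log_pow, Real.log_mul (ne_of_gt hMpos) (by positivity), Real.log_pow] at hl
      push_cast at hl
      linarith
    -- key quantities
    have hTW : 2 * (T * WD r k a m) ≤ Real.log M := by rw [← hueq]; exact hlog2
    have hpsi1 : (1:ℝ) ≤ (psiD k m : ℝ) := by exact_mod_cast psiD_pos k m
    have hphi1 : (1:ℝ) ≤ (phiD r a : ℝ) := by exact_mod_cast phiD_pos r hr a ha1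
    rcases max_choice (Real.log (Pw / Pz)) (Real.log (Rw / Rz)) with hc | hc
    · -- horizontal (Dynkin) direction
      have hlogM : Real.log M ≤ ∑ b ∈ Finset.Icc 1 r,
          (adjD r a b : ℝ) * (Real.log (w b m) - Real.log (z b m)) := by
        rw [hMeq, hc]
        rw [Real.log_div (ne_of_gt hPw) (ne_of_gt hPz), hPwd, hPzd,
          Real.log_prod (fun b hb => ne_of_gt (pow_pos (hwb b hb) _)),
          Real.log_prod (fun b hb => ne_of_gt (pow_pos (hzb b hb) _)),
          ← Finset.sum_sub_distrib]
        apply le_of_eq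
        apply Finset.sum_congr rfl
        intro b hb
        rw [Real.log_pow, Real.log_pow]
        ring
      have hbound : Real.log M ≤ T * (psiD k m : ℝ) *
          (∑ b ∈ Finset.Icc 1 r, (adjD r a b : ℝ) * (phiD r b : ℝ)) := by
        refine le_trans hlogM ?_
        have : ∀ b ∈ Finset.Icc 1 r,
            (adjD r a b : ℝ) * (Real.log (w b m) - Real.log (z b m))
              ≤ (adjD r a b : ℝ) * (T * WD r k b m) := fun b hb =>
          mul_le_mul_of_nonneg_left (hu b hb m hmk) (by positivity)
        calc ∑ b ∈ Finset.Icc 1 r, (adjD r a b : ℝ) * (Real.log (w b m) - Real.log (z b m))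
            ≤ ∑ b ∈ Finset.Icc 1 r, (adjD r a b : ℝ) * (T * WD r k b m) :=
              Finset.sum_le_sum this
          _ = T * (psiD k m : ℝ) * (∑ b ∈ Finset.Icc 1 r, (adjD r a b : ℝ) * (phiD r b : ℝ)) := by
              rw [Finset.mul_sum]
              apply Finset.sum_congr rfl
              intro b _
              unfold WD
              ring
      have hsum : (∑ b ∈ Finset.Icc 1 r, (adjD r a b : ℝ) * (phiD r b : ℝ))
          ≤ 2 * (phiD r a : ℝ) - 2 := by
        have h2 : ((∑ b ∈ Finset.Icc 1 r, adjD r a b * phiD r b : ℕ) : ℝ) + 2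
            ≤ 2 * (phiD r a : ℝ) := by exact_mod_cast sum_adj r hr a ha1 har
        push_cast at h2
        linarith
      have hTpsi : 0 < T * (psiD k m : ℝ) := by positivity
      have : Real.log M < 2 * (T * WD r k a m) := by
        calc Real.log M ≤ T * (psiD k m : ℝ) *
              (∑ b ∈ Finset.Icc 1 r, (adjD r a b : ℝ) * (phiD r b : ℝ)) := hbound
          _ ≤ T * (psiD k m : ℝ) * (2 * (phiD r a : ℝ) - 2) :=
              mul_le_mul_of_nonneg_left hsum (le_of_lt hTpsi)
          _ < 2 * (T * WD r k a m) := by unfold WD; nlinarith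
      linarith
    · -- vertical (level) direction
      have hlogM : Real.log M = (Real.log (w a (m-1)) - Real.log (z a (m-1)))
          + (Real.log (w a (m+1)) - Real.log (z a (m+1))) := by
        rw [hMeq, hc]
        rw [Real.log_div (ne_of_gt hRw) (ne_of_gt hRz), hRwd, hRzd,
          Real.log_mul (ne_of_gt (hwpos a haI (m-1) (by omega))) (ne_of_gt (hwpos a haI (m+1) (by omega))),
          Real.log_mul (ne_of_gt (hzpos a haI (m-1) (by omega))) (ne_of_gt (hzpos a haI (m+1) (by omega)))]
        ring
      have hstep : (psiD k (m-1) : ℝ) + (psiD k (m+1) : ℝ) = 2 * (psiD k m : ℝ) - 2 := by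
        have h2 : ((psiD k (m-1) + psiD k (m+1) + 2 : ℕ) : ℝ) = ((2 * psiD k m : ℕ) : ℝ) := by
          exact_mod_cast congrArg (Nat.cast (R := ℝ)) (psiD_step k m hm1 (by omega))
        push_cast at h2
        linarith
      have hbound : Real.log M ≤ T * (phiD r a : ℝ) * (2 * (psiD k m : ℝ) - 2) := by
        rw [hlogM, ← hstep]
        have b1 := hu a haI (m-1) (by omega)
        have b2 := hu a haI (m+1) (by omega)
        unfold WD at b1 b2
        nlinarith [b1, b2]
      have hTphi : 0 < T * (phiD r a : ℝ) := by positivity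
      have : Real.log M < 2 * (T * WD r k a m) := by
        calc Real.log M ≤ T * (phiD r a : ℝ) * (2 * (psiD k m : ℝ) - 2) := hbound
          _ < 2 * (T * WD r k a m) := by unfold WD; nlinarith
      linarith



section Assembly

variable (r k : ℕ)

lemma limQ_pos' (hr : 4 ≤ r) : ∀ a ∈ Finset.Icc 1 r, ∀ m ≤ k, 0 < limQ r k a m :=
  fun a _ m _ => lt_of_lt_of_le zero_lt_one (one_le_limQ r k hr a m)

lemma limQ_zero (a : ℕ) : limQ r k a 0 = 1 :=
  limQ_boundary r k a 0 (by omega)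

lemma limQ_k (hk : 1 ≤ k) (a : ℕ) : limQ r k a k = 1 :=
  limQ_boundary r k a k (by omega)

lemma limQ_rec' (hr : 4 ≤ r) : ∀ a ∈ Finset.Icc 1 r, ∀ m, 1 ≤ m → m ≤ k - 1 →
    (limQ r k a m)^2 = (∏ b ∈ Finset.Icc 1 r, (limQ r k b m) ^ adjD r a b)
      + limQ r k a (m-1) * limQ r k a (m+1) := by
  intro a ha m h1 h2
  rw [Finset.mem_Icc] at ha
  exact limQ_rec r k hr a m ⟨ha.1, ha.2, h1, h2⟩

lemma limQ_symm (hr : 4 ≤ r) (hk : 1 ≤ k) :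
    ∀ a ∈ Finset.Icc 1 r, ∀ m ≤ k, limQ r k a m = limQ r k a (k - m) := by
  classical
  set zR : ℕ → ℕ → ℝ := fun a m => if m ≤ k then limQ r k a (k - m) else 1 with hzR
  have hpos : ∀ a ∈ Finset.Icc 1 r, ∀ m ≤ k, 0 < zR a m := by
    intro a _ m hm
    simp only [hzR, if_pos hm]
    exact lt_of_lt_of_le zero_lt_one (one_le_limQ r k hr a (k - m))
  have h0 : ∀ a ∈ Finset.Icc 1 r, zR a 0 = 1 := by
    intro a _
    simp only [hzR, if_pos (Nat.zero_le k), Nat.sub_zero]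
    exact limQ_k r k hk a
  have hkk : ∀ a ∈ Finset.Icc 1 r, zR a k = 1 := by
    intro a _
    simp only [hzR, if_pos (le_refl k), Nat.sub_self]
    exact limQ_zero r k a
  have hrec : ∀ a ∈ Finset.Icc 1 r, ∀ m, 1 ≤ m → m ≤ k - 1 →
      (zR a m)^2 = (∏ b ∈ Finset.Icc 1 r, (zR b m) ^ adjD r a b)
        + zR a (m-1) * zR a (m+1) := by
    intro a ha m h1 h2
    rw [Finset.mem_Icc] at ha
    have hk2 : 2 ≤ k := by omega
    have e0 : zR a m = limQ r k a (k - m) := by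
      simp only [hzR, if_pos (show m ≤ k by omega)]
    have e1 : zR a (m-1) = limQ r k a (k - m + 1) := by
      simp only [hzR, if_pos (show m - 1 ≤ k by omega)]
      rw [show k - (m-1) = k - m + 1 from by omega]
    have e2 : zR a (m+1) = limQ r k a (k - m - 1) := by
      simp only [hzR, if_pos (show m + 1 ≤ k by omega)]
      rw [show k - (m+1) = k - m - 1 from by omega]
    have eprod : (∏ b ∈ Finset.Icc 1 r, (zR b m) ^ adjD r a b)
        = ∏ b ∈ Finset.Icc 1 r, (limQ r k b (k - m)) ^ adjD r a b := by
      apply Finset.prod_congr rfl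
      intro b _
      simp only [hzR, if_pos (show m ≤ k by omega)]
    have hmain := limQ_rec r k hr a (k - m) ⟨ha.1, ha.2, by omega, by omega⟩
    rw [e0, e1, e2, eprod, hmain,
      show k - m - 1 = k - m - 1 from rfl, show k - m + 1 = k - m + 1 from rfl]
    ring
  have hle1 := real_le r k hr hk (limQ r k) zR (limQ_pos' r k hr) hpos
    (fun a _ => limQ_zero r k a) (fun a _ => limQ_k r k hk a) h0 hkk
    (limQ_rec' r k hr) hrec
  have hle2 := real_le r k hr hk zR (limQ r k) hpos (limQ_pos' r k hr)
    h0 hkk (fun a _ => limQ_zero r k a) (fun a _ => limQ_k r k hk a)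
    hrec (limQ_rec' r k hr)
  intro a ha m hm
  have heq : zR a m = limQ r k a m := le_antisymm (hle1 a ha m hm) (hle2 a ha m hm)
  rw [← heq]
  simp only [hzR, if_pos hm]

lemma limQ_unimodal (hr : 4 ≤ r) (hk : 1 ≤ k) :
    ∀ a ∈ Finset.Icc 1 r, ∀ m, 1 ≤ m → m ≤ k / 2 →
      limQ r k a (m-1) < limQ r k a m := by
  intro a ha m hm1 hm2
  have haI := ha
  rw [Finset.mem_Icc] at haI
  have h2m : 2 * m ≤ k := by omega
  have hzpos : ∀ j, (0:ℝ) < limQ r k a j :=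
    fun j => lt_of_lt_of_le zero_lt_one (one_le_limQ r k hr a j)
  set ρ : ℕ → ℝ := fun j => limQ r k a (j+1) / limQ r k a j with hρ
  have step : ∀ j, 1 ≤ j → j ≤ k - 1 → ρ j < ρ (j-1) := by
    intro j hj1 hjk
    have hrec := limQ_rec r k hr a j ⟨haI.1, haI.2, hj1, hjk⟩
    have hP : 0 < ∏ b ∈ Finset.Icc 1 r, (limQ r k b j) ^ adjD r a b :=
      Finset.prod_pos fun b _ =>
        pow_pos (lt_of_lt_of_le zero_lt_one (one_le_limQ r k hr b j)) _
    have hlt : limQ r k a (j-1) * limQ r k a (j+1) < (limQ r k a j)^2 := by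
      nlinarith [hrec, hP]
    simp only [hρ]
    rw [show j - 1 + 1 = j from by omega]
    rw [div_lt_div_iff₀ (hzpos j) (hzpos (j-1))]
    nlinarith [hlt]
  have chain : ∀ j, ∀ i, i < j → j ≤ k - 1 → ρ j < ρ i := by
    intro j
    induction j with
    | zero => intro i h1 _; omega
    | succ j ih =>
        intro i h1 h2
        have hs := step (j+1) (by omega) h2
        rw [show j + 1 - 1 = j from by omega] at hs
        rcases Nat.lt_or_ge i j with hij | hij
        · exact lt_trans hs (ih i hij (by omega))
        · have : i = j := by omega
          rw [this]
          exact hs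
  have hcmp : ρ (k - m) < ρ (m-1) := by
    apply chain
    · omega
    · omega
  have hsm : limQ r k a (k - m) = limQ r k a m := by
    rw [limQ_symm r k hr hk a ha m (by omega)]
  have hsm1 : limQ r k a (k - m + 1) = limQ r k a (m-1) := by
    have := limQ_symm r k hr hk a ha (m-1) (by omega)
    rw [this, show k - (m-1) = k - m + 1 from by omega]
  have hρ1 : ρ (m-1) = limQ r k a m / limQ r k a (m-1) := by
    simp only [hρ]
    rw [show m - 1 + 1 = m from by omega]
  have hρ2 : ρ (k - m) = limQ r k a (m-1) / limQ r k a m := by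
    simp only [hρ]
    rw [hsm1, hsm]
  rw [hρ1, hρ2] at hcmp
  have hx := hzpos (m-1)
  have hy := hzpos m
  rw [div_lt_div_iff₀ hy hx] at hcmp
  nlinarith [hcmp, hx, hy]

end Assembly
theorem stmt0 (r k : ℕ) (hr : 4 ≤ r) (hk : 1 ≤ k) :
    ∃ Q : ℕ → ℕ → ℂ,
      (IsResQSysD r k Q ∧
        ∀ a ∈ Finset.Icc 1 r, ∀ m ≤ k, (Q a m).im = 0 ∧ 0 < (Q a m).re) ∧
      (∀ Q' : ℕ → ℕ → ℂ,
        (IsResQSysD r k Q' ∧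
          ∀ a ∈ Finset.Icc 1 r, ∀ m ≤ k, (Q' a m).im = 0 ∧ 0 < (Q' a m).re) →
        ∀ a ∈ Finset.Icc 1 r, ∀ m ≤ k, Q' a m = Q a m) ∧
      (∀ a ∈ Finset.Icc 1 r, ∀ m ≤ k, Q a m = Q a (k - m)) ∧
      (∀ a ∈ Finset.Icc 1 r, ∀ m : ℕ, 1 ≤ m → m ≤ k / 2 → (Q a (m - 1)).re < (Q a m).re) := by
  classical
  refine ⟨fun a m => ((limQ r k a m : ℝ) : ℂ), ⟨⟨?_, ?_, ?_⟩, ?_⟩, ?_, ?_, ?_⟩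
  · -- boundary at 0
    intro a _
    show ((limQ r k a 0 : ℝ) : ℂ) = 1
    rw [limQ_zero r k a]
    norm_num
  · -- boundary at k
    intro a _
    show ((limQ r k a k : ℝ) : ℂ) = 1
    rw [limQ_k r k hk a]
    norm_num
  · -- recurrence
    intro a ha m h1 h2
    have hre := limQ_rec' r k hr a ha m h1 h2
    calc ((limQ r k a m : ℝ) : ℂ)^2
        = (((limQ r k a m)^2 : ℝ) : ℂ) := by push_cast; ring
      _ = (((∏ b ∈ Finset.Icc 1 r, (limQ r k b m) ^ adjD r a b)
            + limQ r k a (m-1) * limQ r k a (m+1) : ℝ) : ℂ) := by rw [hre]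
      _ = (∏ b ∈ Finset.Icc 1 r, ((limQ r k b m : ℝ) : ℂ) ^ adjD r a b)
            + ((limQ r k a (m-1) : ℝ) : ℂ) * ((limQ r k a (m+1) : ℝ) : ℂ) := by
          push_cast
          rfl
  · -- realness and positivity
    intro a ha m hm
    refine ⟨Complex.ofReal_im _, ?_⟩
    rw [Complex.ofReal_re]
    exact limQ_pos' r k hr a ha m hm
  · -- uniqueness
    rintro Q' ⟨hQ'sys, hQ'pos⟩ a ha m hm
    obtain ⟨hQ'0, hQ'k, hQ'rec⟩ := hQ'sys
    set w : ℕ → ℕ → ℝ := fun a m => (Q' a m).re with hw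
    have hQ'real : ∀ b ∈ Finset.Icc 1 r, ∀ j ≤ k, Q' b j = ((w b j : ℝ) : ℂ) := by
      intro b hb j hj
      apply Complex.ext
      · simp [hw]
      · simp [hw, (hQ'pos b hb j hj).1]
    have hw0 : ∀ a ∈ Finset.Icc 1 r, w a 0 = 1 := by
      intro a ha
      simp [hw, hQ'0 a ha]
    have hwk : ∀ a ∈ Finset.Icc 1 r, w a k = 1 := by
      intro a ha
      simp [hw, hQ'k a ha]
    have hwpos : ∀ a ∈ Finset.Icc 1 r, ∀ m ≤ k, 0 < w a m :=
      fun a ha m hm => (hQ'pos a ha m hm).2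
    have hwrec : ∀ a ∈ Finset.Icc 1 r, ∀ m, 1 ≤ m → m ≤ k - 1 →
        (w a m)^2 = (∏ b ∈ Finset.Icc 1 r, (w b m) ^ adjD r a b)
          + w a (m-1) * w a (m+1) := by
      intro a ha m h1 h2
      have hc := hQ'rec a ha m h1 h2
      have hprodeq : (∏ b ∈ Finset.Icc 1 r, (Q' b m) ^ adjD r a b)
          = ∏ b ∈ Finset.Icc 1 r, ((w b m : ℝ) : ℂ) ^ adjD r a b :=
        Finset.prod_congr rfl (fun b hb => by rw [hQ'real b hb m (by omega)])
      rw [hQ'real a ha m (by omega), hQ'real a ha (m-1) (by omega),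
        hQ'real a ha (m+1) (by omega), hprodeq] at hc
      have hc2 : (((w a m)^2 : ℝ) : ℂ)
          = (((∏ b ∈ Finset.Icc 1 r, (w b m) ^ adjD r a b)
              + w a (m-1) * w a (m+1) : ℝ) : ℂ) := by
        push_cast
        convert hc using 2
      exact_mod_cast hc2
    have hle1 := real_le r k hr hk (limQ r k) w (limQ_pos' r k hr) hwpos
      (fun a _ => limQ_zero r k a) (fun a _ => limQ_k r k hk a) hw0 hwk
      (limQ_rec' r k hr) hwrec
    have hle2 := real_le r k hr hk w (limQ r k) hwpos (limQ_pos' r k hr)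
      hw0 hwk (fun a _ => limQ_zero r k a) (fun a _ => limQ_k r k hk a)
      hwrec (limQ_rec' r k hr)
    have heq : w a m = limQ r k a m :=
      le_antisymm (hle1 a ha m hm) (hle2 a ha m hm)
    rw [hQ'real a ha m hm, heq]
  · -- symmetry
    intro a ha m hm
    show ((limQ r k a m : ℝ) : ℂ) = ((limQ r k a (k - m) : ℝ) : ℂ)
    rw [limQ_symm r k hr hk a ha m hm]
  · -- unimodality
    intro a ha m h1 h2
    simp only [Complex.ofReal_re]
    exact limQ_unimodal r k hr hk a ha m h1 h2
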